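/- arXiv:math/0110189 — 2 statements merged into one kernel-verified Lean document; each statement's English description precedes it below -/
import Mathlib

section
/- The function g defined by g(x) = −x − γ/ln 2 + 1/2 − ∑_{m=−∞}^{0} exp(−2^{x−m}) + ∑_{m=1}^{∞} (1 − exp(−2^{x−m})) satisfies g(x+1) = g(x) for every real x. -/
open Real

lemma sumA (x : ℝ) : Summable (fun j : ℕ => Real.exp (-(2 : ℝ) ^ (x + j))) := by
  have h2x : (0:ℝ) < (2:ℝ) ^ x := rpow_pos_of_pos two_pos x
  have hbound : Summable (fun j : ℕ => Real.exp (-(2:ℝ)^x) ^ j) :=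
    summable_geometric_of_lt_one (Real.exp_nonneg _)
      (Real.exp_lt_one_iff.mpr (by linarith))
  apply Summable.of_nonneg_of_le (fun j => (Real.exp_pos _).le) _ hbound
  intro j
  rw [← Real.exp_nat_mul]
  apply Real.exp_le_exp.mpr
  rw [Real.rpow_add two_pos]
  have hj : (j:ℝ) ≤ (2:ℝ) ^ (j:ℝ) := by
    rw [Real.rpow_natCast]
    exact_mod_cast (Nat.lt_two_pow_self (n := j)).le
  nlinarith

lemma sumB (x : ℝ) : Summable (fun j : ℕ => 1 - Real.exp (-(2 : ℝ) ^ (x - (j + 1)))) := by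
  have hbound : Summable (fun j : ℕ => (2:ℝ) ^ (x-1) * (1/2:ℝ) ^ j) :=
    Summable.mul_left _ (summable_geometric_of_lt_one (by norm_num) (by norm_num))
  apply Summable.of_nonneg_of_le _ _ hbound
  · intro j
    have : Real.exp (-(2 : ℝ) ^ (x - (j + 1))) ≤ 1 := by
      apply Real.exp_le_one_iff.mpr
      simp [(rpow_pos_of_pos two_pos _).le]
    linarith
  · intro j
    have h1 : 1 - (2 : ℝ) ^ (x - (j + 1)) ≤ Real.exp (-(2 : ℝ) ^ (x - (j + 1))) := by
      have := Real.add_one_le_exp (-(2 : ℝ) ^ (x - (j + 1)))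
      linarith
    have h2 : (2 : ℝ) ^ (x - ((j:ℝ) + 1)) = (2:ℝ) ^ (x-1) * (1/2:ℝ) ^ j := by
      rw [show x - ((j:ℝ)+1) = (x-1) - (j:ℝ) by ring, Real.rpow_sub two_pos,
        Real.rpow_natCast]
      field_simp
      rw [← mul_pow]; norm_num
    rw [← h2]
    linarith

/-- The periodic function `g`:
`g(x) = -x - γ/ln 2 + 1/2 - ∑_{m=-∞}^{0} exp(-2^{x-m}) + ∑_{m=1}^{∞} (1 - exp(-2^{x-m}))`,
the first sum reindexed by `m = -j` and the second by `m = j+1`, `j : ℕ`. -/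
noncomputable def g (x : ℝ) : ℝ :=
  -x - Real.eulerMascheroniConstant / Real.log 2 + 1 / 2
    - ∑' j : ℕ, Real.exp (-(2 : ℝ) ^ (x + j))
    + ∑' j : ℕ, (1 - Real.exp (-(2 : ℝ) ^ (x - (j + 1))))

theorem g_periodic (x : ℝ) : g (x + 1) = g x := by
  unfold g
  have eA : ∑' j : ℕ, Real.exp (-(2:ℝ) ^ (x + j))
      = Real.exp (-(2:ℝ)^x) + ∑' j : ℕ, Real.exp (-(2:ℝ) ^ (x + 1 + j)) := by
    rw [Summable.tsum_eq_zero_add (sumA x)]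
    have h0 : Real.exp (-(2:ℝ) ^ (x + ((0:ℕ):ℝ))) = Real.exp (-(2:ℝ)^x) := by norm_num
    have hs : ∀ j : ℕ, Real.exp (-(2:ℝ) ^ (x + ((j:ℕ) + 1 : ℕ)))
        = Real.exp (-(2:ℝ) ^ (x + 1 + j)) := by
      intro j; push_cast; ring_nf
    rw [h0, tsum_congr hs]
  have eB : ∑' j : ℕ, (1 - Real.exp (-(2:ℝ) ^ (x + 1 - (j + 1))))
      = (1 - Real.exp (-(2:ℝ)^x)) + ∑' j : ℕ, (1 - Real.exp (-(2:ℝ) ^ (x - (j + 1)))) := by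
    rw [Summable.tsum_eq_zero_add (sumB (x+1))]
    have h0 : 1 - Real.exp (-(2:ℝ) ^ (x + 1 - (((0:ℕ):ℝ) + 1)))
        = 1 - Real.exp (-(2:ℝ)^x) := by norm_num
    have hs : ∀ j : ℕ, 1 - Real.exp (-(2:ℝ) ^ (x + 1 - ((((j:ℕ) + 1 : ℕ):ℝ) + 1)))
        = 1 - Real.exp (-(2:ℝ) ^ (x - (j + 1))) := by
      intro j; push_cast; ring_nf
    rw [h0, tsum_congr hs]
  rw [eA, eB]
  ring
end

section
/- The function g defined by g(x) = −x − γ/ln 2 + 1/2 − ∑_{m=−∞}^{0} exp(−2^{x−m}) + ∑_{m=1}^{∞} (1 − exp(−2^{x−m})) has mean zero over a period: ∫₀¹ g(x) dx = 0. -/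
open Real

section GMeanZeroAux

open MeasureTheory Real Set Filter intervalIntegral Topology

open MeasureTheory Real Set Filter intervalIntegral Topology

lemma two_rpow_eq (y : ℝ) : (2:ℝ) ^ y = exp (Real.log 2 * y) := rpow_def_of_pos two_pos y

lemma hasDerivAt_two_rpow (x : ℝ) :
    HasDerivAt (fun y : ℝ => (2:ℝ) ^ y) ((2:ℝ) ^ x * Real.log 2) x :=
  (Real.hasStrictDerivAt_const_rpow two_pos x).hasDerivAt

lemma continuous_two_rpow : Continuous (fun y : ℝ => (2:ℝ) ^ y) := by
  simp only [two_rpow_eq]; fun_prop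

lemma exp_neg_two_rpow_le (y : ℝ) :
    exp (-(2:ℝ) ^ y) ≤ exp (-1) * exp (-(Real.log 2 * y)) := by
  rw [← Real.exp_add]
  apply Real.exp_le_exp.mpr
  have h := Real.add_one_le_exp (Real.log 2 * y)
  rw [two_rpow_eq]
  linarith

lemma integrableOn_log_Ioc : IntegrableOn Real.log (Ioc (0:ℝ) 1) := by
  refine integrableOn_Ioc_of_intervalIntegral_norm_bounded_left
    (I := 1) (a := fun n : ℕ => 1 / (n + 1 : ℝ)) (l := atTop) (fun n => ?_)
    tendsto_one_div_add_atTop_nhds_zero_nat ?_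
  · refine (intervalIntegrable_log (μ := volume) (a := 1 / (n + 1 : ℝ)) (b := 1) ?_).1.mono_set
      (fun x hx => ⟨hx.1, hx.2⟩)
    rw [uIcc_of_le (by rw [div_le_one (by positivity)]; linarith [Nat.cast_nonneg (α := ℝ) n])]
    intro h
    have : (0:ℝ) < 1 / (n + 1 : ℝ) := by positivity
    linarith [h.1]
  filter_upwards with n
  set a : ℝ := 1 / (n + 1 : ℝ) with ha
  have ha0 : 0 < a := by positivity
  have ha1 : a ≤ 1 := by
    rw [ha, div_le_one (by positivity)]; linarith [Nat.cast_nonneg (α := ℝ) n]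
  have h1 : ∫ x in Ioc a 1, ‖Real.log x‖ = ∫ x in Ioc a 1, -Real.log x := by
    apply setIntegral_congr_fun measurableSet_Ioc
    intro x hx
    simp only [Real.norm_eq_abs]
    rw [abs_of_nonpos (Real.log_nonpos (ha0.trans hx.1).le hx.2)]
  rw [h1, ← intervalIntegral.integral_of_le ha1, intervalIntegral.integral_neg,
    integral_log]
  have h2 : a * Real.log a ≤ 0 :=
    mul_nonpos_of_nonneg_of_nonpos ha0.le (Real.log_nonpos ha0.le ha1)
  simp only [Real.log_one]
  nlinarith

lemma integrableOn_log_exp_Ioc : IntegrableOn (fun t => Real.log t * exp (-t)) (Ioc (0:ℝ) 1) := by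
  apply Integrable.mono integrableOn_log_Ioc
  · exact (Real.measurable_log.mul
      ((measurable_exp.comp measurable_neg))).aestronglyMeasurable
  · filter_upwards [ae_restrict_mem measurableSet_Ioc] with t ht
    rw [norm_mul]
    calc ‖Real.log t‖ * ‖exp (-t)‖ ≤ ‖Real.log t‖ * 1 := by
          gcongr
          rw [Real.norm_eq_abs, abs_of_pos (exp_pos _)]
          exact exp_le_one_iff.mpr (by linarith [ht.1])
      _ = ‖Real.log t‖ := mul_one _

lemma integrableOn_exp_neg_mul_self_Ioi : IntegrableOn (fun t : ℝ => exp (-t) * t) (Ioi (1:ℝ)) := by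
  have h2 : IntegrableOn (fun t : ℝ => exp (-t) * t ^ ((2:ℝ) - 1)) (Ioi 0) :=
    Real.GammaIntegral_convergent (by norm_num)
  have h3 := h2.mono_set (Ioi_subset_Ioi zero_le_one)
  apply h3.congr_fun _ measurableSet_Ioi
  intro x hx
  norm_num [Real.rpow_one]

lemma integrableOn_log_exp_Ioi : IntegrableOn (fun t => Real.log t * exp (-t)) (Ioi (1:ℝ)) := by
  apply Integrable.mono integrableOn_exp_neg_mul_self_Ioi
  · exact (Real.measurable_log.mul
      ((measurable_exp.comp measurable_neg))).aestronglyMeasurable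
  · filter_upwards [ae_restrict_mem measurableSet_Ioi] with t ht
    have ht1 : (1:ℝ) < t := ht
    rw [norm_mul, Real.norm_eq_abs, Real.norm_eq_abs, Real.norm_eq_abs,
      abs_of_nonneg (Real.log_nonneg ht1.le), abs_of_pos (exp_pos _),
      abs_of_pos (by positivity : (0:ℝ) < exp (-t) * t)]
    rw [mul_comm (exp (-t)) t]
    gcongr
    calc Real.log t ≤ t - 1 := Real.log_le_sub_one_of_pos (by linarith)
      _ ≤ t := by linarith

lemma integrableOn_log_exp_Ioi_zero : IntegrableOn (fun t => Real.log t * exp (-t)) (Ioi (0:ℝ)) := by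
  rw [← Ioc_union_Ioi_eq_Ioi zero_le_one]
  exact integrableOn_log_exp_Ioc.union integrableOn_log_exp_Ioi

lemma integrableOn_exp_neg_div_Ioi : IntegrableOn (fun t : ℝ => exp (-t) / t) (Ioi (1:ℝ)) := by
  apply Integrable.mono (exp_neg_integrableOn_Ioi 1 one_pos)
  · exact ((measurable_exp.comp measurable_neg).div measurable_id).aestronglyMeasurable
  · filter_upwards [ae_restrict_mem measurableSet_Ioi] with t ht
    have ht1 : (1:ℝ) < t := ht
    rw [Real.norm_eq_abs, Real.norm_eq_abs, abs_of_pos (by positivity), abs_of_pos (exp_pos _),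
      div_le_iff₀ (by linarith), neg_one_mul]
    nlinarith [exp_pos (-t)]

lemma integrableOn_one_sub_exp_div_Ioc :
    IntegrableOn (fun t : ℝ => (1 - exp (-t)) / t) (Ioc (0:ℝ) 1) := by
  have hb : IntegrableOn (fun _ : ℝ => (1:ℝ)) (Ioc (0:ℝ) 1) :=
    integrableOn_const (by simp)
  apply Integrable.mono hb
  · exact ((measurable_const.sub (measurable_exp.comp measurable_neg)).div
      measurable_id).aestronglyMeasurable
  · filter_upwards [ae_restrict_mem measurableSet_Ioc] with t ht
    have ht0 : 0 < t := ht.1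
    have h1 : 1 - exp (-t) ≤ t := by linarith [Real.add_one_le_exp (-t)]
    have h0 : 0 ≤ 1 - exp (-t) := by
      have := exp_le_one_iff.mpr (by linarith : -t ≤ 0); linarith
    rw [Real.norm_eq_abs, abs_of_nonneg (by positivity), norm_one, div_le_one ht0]
    exact h1
-- γ as an integral
lemma neg_gamma_integral :
    ∫ t in Ioi (0:ℝ), Real.log t * exp (-t) = -Real.eulerMascheroniConstant := by
  have h0 : (0:ℝ) < (1:ℂ).re := by norm_num
  have hC : HasDerivAt Complex.GammaIntegral
      ((∫ t in Ioi (0:ℝ), Real.log t * exp (-t) : ℝ) : ℂ) 1 := by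
    have := Complex.hasDerivAt_GammaIntegral h0
    convert this using 2
    rw [show ((∫ t in Ioi (0:ℝ), Real.log t * exp (-t) : ℝ) : ℂ)
        = ∫ t in Ioi (0:ℝ), ((Real.log t * exp (-t) : ℝ) : ℂ) from _root_.integral_ofReal.symm]
    apply setIntegral_congr_fun measurableSet_Ioi
    intro t _
    push_cast
    rw [sub_self, Complex.cpow_zero, one_mul]
  have hGam : HasDerivAt Complex.Gamma
      ((∫ t in Ioi (0:ℝ), Real.log t * exp (-t) : ℝ) : ℂ) 1 := by
    apply hC.congr_of_eventuallyEq
    have hopen : IsOpen {s : ℂ | 0 < s.re} := isOpen_lt continuous_const Complex.continuous_re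
    filter_upwards [hopen.mem_nhds h0] with s hs
    exact Complex.Gamma_eq_integral hs
  have hR : HasDerivAt Real.Gamma (∫ t in Ioi (0:ℝ), Real.log t * exp (-t)) 1 := by
    have h1 : HasDerivAt (fun x : ℝ => (Complex.Gamma x).re)
        ((∫ t in Ioi (0:ℝ), Real.log t * exp (-t) : ℝ) : ℂ).re 1 := by
      apply HasDerivAt.real_of_complex (z := (1:ℝ))
      simpa using hGam
    simp only [Complex.ofReal_re] at h1
    apply h1.congr_of_eventuallyEq
    filter_upwards with x
    exact (Complex.ofReal_re _).symm
  exact hR.unique Real.hasDerivAt_Gamma_one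

lemma integral_log_exp_Ioi_one :
    ∫ t in Ioi (1:ℝ), Real.log t * exp (-t) = ∫ t in Ioi (1:ℝ), exp (-t) / t := by
  set f : ℝ → ℝ := fun t => Real.log t * exp (-t) - exp (-t) / t with hf
  have hfi : IntegrableOn f (Ioi (1:ℝ)) :=
    integrableOn_log_exp_Ioi.sub integrableOn_exp_neg_div_Ioi
  have key : ∫ t in Ioi (1:ℝ), f t = 0 := by
    have hderiv : ∀ t : ℝ, 0 < t →
        HasDerivAt (fun t => -(exp (-t) * Real.log t)) (f t) t := by
      intro t ht
      have h1 : HasDerivAt (fun t : ℝ => exp (-t)) (exp (-t) * (-1)) t :=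
        (hasDerivAt_neg t).exp
      have h2 : HasDerivAt Real.log t⁻¹ t := Real.hasDerivAt_log (ne_of_gt ht)
      have : HasDerivAt (fun t => -(exp (-t) * Real.log t))
          (-(exp (-t) * (-1) * Real.log t + exp (-t) * t⁻¹)) t := (h1.mul h2).neg
      convert this using 1
      simp only [hf, div_eq_mul_inv]
      ring
    have hT1 : Tendsto (fun n : ℕ => ∫ t in (1:ℝ)..(n:ℝ), f t) atTop
        (𝓝 (∫ t in Ioi (1:ℝ), f t)) :=
      intervalIntegral_tendsto_integral_Ioi 1 hfi tendsto_natCast_atTop_atTop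
    have heq : ∀ n : ℕ, 1 ≤ n → ∫ t in (1:ℝ)..(n:ℝ), f t = -(exp (-(n:ℝ)) * Real.log n) := by
      intro n hn
      have hn1 : (1:ℝ) ≤ (n:ℝ) := by exact_mod_cast hn
      rw [intervalIntegral.integral_eq_sub_of_hasDerivAt
        (f := fun t => -(exp (-t) * Real.log t)) (f' := f) ?_ ?_]
      · simp
      · intro x hx
        rw [uIcc_of_le hn1] at hx
        exact hderiv x (by linarith [hx.1])
      · rw [intervalIntegrable_iff_integrableOn_Ioc_of_le hn1]
        exact hfi.mono_set (fun x hx => hx.1)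
    have hT2 : Tendsto (fun n : ℕ => ∫ t in (1:ℝ)..(n:ℝ), f t) atTop (𝓝 0) := by
      apply Tendsto.congr' (f₁ := fun n : ℕ => -(exp (-(n:ℝ)) * Real.log n))
      · filter_upwards [eventually_ge_atTop 1] with n hn using (heq n hn).symm
      · apply squeeze_zero_norm' (a := fun n : ℕ => (n:ℝ) ^ 1 * exp (-(n:ℝ)))
        · filter_upwards [eventually_ge_atTop 1] with n hn
          have hn1 : (1:ℝ) ≤ (n:ℝ) := by exact_mod_cast hn
          rw [norm_neg, norm_mul, Real.norm_eq_abs, Real.norm_eq_abs, abs_of_pos (exp_pos _),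
            abs_of_nonneg (Real.log_nonneg hn1), pow_one, mul_comm]
          gcongr
          calc Real.log n ≤ (n:ℝ) - 1 := Real.log_le_sub_one_of_pos (by linarith)
            _ ≤ (n:ℝ) := by linarith
        · exact (tendsto_pow_mul_exp_neg_atTop_nhds_zero 1).comp tendsto_natCast_atTop_atTop
    exact tendsto_nhds_unique hT1 hT2
  have := integral_sub integrableOn_log_exp_Ioi integrableOn_exp_neg_div_Ioi
  rw [hf] at key
  simp only at this key
  linarith [this ▸ key]
lemma integral_log_exp_Ioc_zero_one :
    ∫ t in Ioc (0:ℝ) 1, Real.log t * exp (-t) = - ∫ t in Ioc (0:ℝ) 1, (1 - exp (-t)) / t := by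
  set h : ℝ → ℝ := fun t => Real.log t * exp (-t) + (1 - exp (-t)) / t with hh
  have hint : IntegrableOn h (Ioc (0:ℝ) 1) :=
    integrableOn_log_exp_Ioc.add integrableOn_one_sub_exp_div_Ioc
  set a : ℕ → ℝ := fun n => 1 / (n + 1 : ℝ) with ha
  have ha0 : ∀ n, 0 < a n := fun n => by positivity
  have ha1 : ∀ n, a n ≤ 1 := fun n => by
    rw [ha]; rw [div_le_one (by positivity)]; linarith [Nat.cast_nonneg (α := ℝ) n]
  have haT : Tendsto a atTop (𝓝[>] 0) := by
    apply tendsto_nhdsWithin_of_tendsto_nhds_of_eventually_within _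
      tendsto_one_div_add_atTop_nhds_zero_nat
    filter_upwards with n using ha0 n
  have key : ∫ t in Ioc (0:ℝ) 1, h t = 0 := by
    have hsub : ∀ n, Ioc (a n) 1 ⊆ Ioc (0:ℝ) 1 :=
      fun n x hx => ⟨(ha0 n).trans hx.1, hx.2⟩
    have hUnion : ⋃ n, Ioc (a n) 1 = Ioc (0:ℝ) 1 := by
      apply Subset.antisymm (iUnion_subset hsub)
      intro x hx
      obtain ⟨n, hn⟩ := exists_nat_one_div_lt hx.1
      exact mem_iUnion.mpr ⟨n, ⟨hn, hx.2⟩⟩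
    have hmono : Monotone fun n => Ioc (a n) 1 := by
      intro m n hmn
      apply Ioc_subset_Ioc_left
      rw [ha]
      apply one_div_le_one_div_of_le (by positivity)
      have : (m:ℝ) ≤ (n:ℝ) := by exact_mod_cast hmn
      linarith
    have hT1 : Tendsto (fun n => ∫ t in Ioc (a n) 1, h t) atTop
        (𝓝 (∫ t in Ioc (0:ℝ) 1, h t)) := by
      have := tendsto_setIntegral_of_monotone (fun n => measurableSet_Ioc) hmono
        (hUnion ▸ hint)
      rwa [hUnion] at this
    have heq : ∀ n, ∫ t in Ioc (a n) 1, h t = -((1 - exp (-(a n))) * Real.log (a n)) := by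
      intro n
      rw [← intervalIntegral.integral_of_le (ha1 n)]
      rw [intervalIntegral.integral_eq_sub_of_hasDerivAt
        (f := fun t => (1 - exp (-t)) * Real.log t) (f' := h) ?_ ?_]
      · simp
      · intro x hx
        rw [uIcc_of_le (ha1 n)] at hx
        have hx0 : 0 < x := lt_of_lt_of_le (ha0 n) hx.1
        have d1 : HasDerivAt (fun t : ℝ => 1 - exp (-t)) (exp (-x)) x := by
          have : HasDerivAt (fun t : ℝ => 1 - exp (-t)) (-(exp (-x) * (-1))) x :=
            ((hasDerivAt_neg x).exp).const_sub 1
          convert this using 1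
          ring
        have d2 : HasDerivAt Real.log x⁻¹ x := Real.hasDerivAt_log (ne_of_gt hx0)
        have : HasDerivAt (fun t => (1 - exp (-t)) * Real.log t)
            (exp (-x) * Real.log x + (1 - exp (-x)) * x⁻¹) x := d1.mul d2
        refine this.congr_deriv ?_
        rw [hh]
        simp only
        rw [div_eq_mul_inv]
        ring
      · rw [intervalIntegrable_iff_integrableOn_Ioc_of_le (ha1 n)]
        exact hint.mono_set (hsub n)
    have hT2 : Tendsto (fun n => ∫ t in Ioc (a n) 1, h t) atTop (𝓝 0) := by
      rw [show (fun n => ∫ t in Ioc (a n) 1, h t)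
        = fun n => -((1 - exp (-(a n))) * Real.log (a n)) from funext heq]
      apply squeeze_zero_norm' (a := fun n => |Real.log (a n) * (a n) ^ (1:ℝ)|)
      · filter_upwards with n
        rw [norm_neg, norm_mul, Real.norm_eq_abs, Real.norm_eq_abs, abs_mul, Real.rpow_one,
          abs_of_pos (ha0 n), mul_comm |Real.log (a n)| (a n)]
        gcongr
        have h1 : 1 - exp (-(a n)) ≤ a n := by linarith [Real.add_one_le_exp (-(a n))]
        have h0 : 0 ≤ 1 - exp (-(a n)) := by
          have := exp_le_one_iff.mpr (by linarith [ha0 n] : -(a n) ≤ 0); linarith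
        rw [abs_of_nonneg h0]
        exact h1
      · have := ((tendsto_log_mul_rpow_nhdsGT_zero one_pos).comp haT).abs
        simpa using this
    exact tendsto_nhds_unique hT1 hT2
  have hsplit := integral_add integrableOn_log_exp_Ioc integrableOn_one_sub_exp_div_Ioc
  rw [hh] at key
  simp only at hsplit key
  linarith [hsplit ▸ key]

lemma gamma_as_integrals :
    Real.eulerMascheroniConstant
      = (∫ t in Ioc (0:ℝ) 1, (1 - exp (-t)) / t) - ∫ t in Ioi (1:ℝ), exp (-t) / t := by
  have hsplit : ∫ t in Ioi (0:ℝ), Real.log t * exp (-t)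
      = (∫ t in Ioc (0:ℝ) 1, Real.log t * exp (-t))
        + ∫ t in Ioi (1:ℝ), Real.log t * exp (-t) := by
    rw [← Ioc_union_Ioi_eq_Ioi (zero_le_one (α := ℝ))]
    exact setIntegral_union (Ioc_disjoint_Ioi le_rfl) measurableSet_Ioi
      integrableOn_log_exp_Ioc integrableOn_log_exp_Ioi
  rw [neg_gamma_integral, integral_log_exp_Ioc_zero_one, integral_log_exp_Ioi_one] at hsplit
  linarith
lemma image_two_rpow_Ioi : (fun x : ℝ => (2:ℝ) ^ x) '' Ioi 0 = Ioi 1 := by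
  ext t
  constructor
  · rintro ⟨x, hx, rfl⟩
    have : (2:ℝ) ^ (0:ℝ) < (2:ℝ) ^ x := by
      rw [Real.rpow_lt_rpow_left_iff one_lt_two]; exact hx
    simpa using this
  · intro ht
    have ht0 : (0:ℝ) < t := lt_trans one_pos ht
    refine ⟨Real.logb 2 t, Real.logb_pos one_lt_two ht, ?_⟩
    exact Real.rpow_logb two_pos (by norm_num) ht0

lemma image_two_rpow_neg_Ioi : (fun x : ℝ => (2:ℝ) ^ (-x)) '' Ioi 0 = Ioo 0 1 := by
  ext t
  constructor
  · rintro ⟨x, hx, rfl⟩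
    refine ⟨Real.rpow_pos_of_pos two_pos _, ?_⟩
    have : (2:ℝ) ^ (-x) < (2:ℝ) ^ (0:ℝ) := by
      rw [Real.rpow_lt_rpow_left_iff one_lt_two]; simpa using hx
    simpa using this
  · intro ht
    refine ⟨-Real.logb 2 t, ?_, ?_⟩
    · simp only [mem_Ioi]
      have := Real.logb_neg one_lt_two ht.1 ht.2
      linarith
    · show (2:ℝ) ^ (-(-Real.logb 2 t)) = t
      rw [neg_neg]
      exact Real.rpow_logb two_pos (by norm_num) ht.1

lemma Ia_eq : ∫ x in Ioi (0:ℝ), exp (-(2:ℝ) ^ x)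
    = (∫ t in Ioi (1:ℝ), exp (-t) / t) / Real.log 2 := by
  have hlog2 : (0:ℝ) < Real.log 2 := Real.log_pos one_lt_two
  have key := integral_image_eq_integral_abs_deriv_smul (f := fun x : ℝ => (2:ℝ) ^ x)
    (f' := fun x : ℝ => (2:ℝ) ^ x * Real.log 2) (s := Ioi 0) measurableSet_Ioi
    (fun x _ => (hasDerivAt_two_rpow x).hasDerivWithinAt)
    (fun x _ y _ hxy => by
      by_contra hne
      rcases lt_or_gt_of_ne hne with h | h
      · have : (2:ℝ) ^ x < (2:ℝ) ^ y := (Real.rpow_lt_rpow_left_iff one_lt_two).mpr h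
        exact absurd hxy (ne_of_lt this)
      · have : (2:ℝ) ^ y < (2:ℝ) ^ x := (Real.rpow_lt_rpow_left_iff one_lt_two).mpr h
        exact absurd hxy (ne_of_gt this))
    (fun t => exp (-t) / (t * Real.log 2))
  rw [image_two_rpow_Ioi] at key
  have h1 : ∫ t in Ioi (1:ℝ), exp (-t) / (t * Real.log 2)
      = (∫ t in Ioi (1:ℝ), exp (-t) / t) / Real.log 2 := by
    rw [← MeasureTheory.integral_div]
    congr 1; ext t; rw [div_div]
  rw [h1] at key
  rw [key]
  apply setIntegral_congr_fun measurableSet_Ioi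
  intro x _
  have h2 : (0:ℝ) < (2:ℝ) ^ x := Real.rpow_pos_of_pos two_pos x
  simp only [smul_eq_mul]
  rw [abs_of_pos (by positivity)]
  field_simp

lemma Ib_eq : ∫ x in Ioi (0:ℝ), (1 - exp (-(2:ℝ) ^ (-x)))
    = (∫ t in Ioc (0:ℝ) 1, (1 - exp (-t)) / t) / Real.log 2 := by
  have hlog2 : (0:ℝ) < Real.log 2 := Real.log_pos one_lt_two
  have key := integral_image_eq_integral_abs_deriv_smul (f := fun x : ℝ => (2:ℝ) ^ (-x))
    (f' := fun x : ℝ => -((2:ℝ) ^ (-x) * Real.log 2)) (s := Ioi 0) measurableSet_Ioi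
    (fun x _ => by
      have h : HasDerivAt (fun x : ℝ => (2:ℝ) ^ (-x)) ((2:ℝ) ^ (-x) * Real.log 2 * (-1)) x :=
        (hasDerivAt_two_rpow (-x)).comp x (hasDerivAt_neg x)
      simpa [mul_comm, mul_neg] using h.hasDerivWithinAt)
    (fun x _ y _ hxy => by
      by_contra hne
      rcases lt_or_gt_of_ne hne with h | h
      · have : (2:ℝ) ^ (-y) < (2:ℝ) ^ (-x) :=
          (Real.rpow_lt_rpow_left_iff one_lt_two).mpr (by linarith)
        exact absurd hxy (ne_of_gt this)
      · have : (2:ℝ) ^ (-x) < (2:ℝ) ^ (-y) :=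
          (Real.rpow_lt_rpow_left_iff one_lt_two).mpr (by linarith)
        exact absurd hxy (ne_of_lt this))
    (fun t => (1 - exp (-t)) / (t * Real.log 2))
  rw [image_two_rpow_neg_Ioi] at key
  have h1 : ∫ t in Ioc (0:ℝ) 1, (1 - exp (-t)) / t
      = ∫ t in Ioo (0:ℝ) 1, (1 - exp (-t)) / t := integral_Ioc_eq_integral_Ioo
  have h2 : ∫ t in Ioo (0:ℝ) 1, (1 - exp (-t)) / (t * Real.log 2)
      = (∫ t in Ioo (0:ℝ) 1, (1 - exp (-t)) / t) / Real.log 2 := by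
    rw [← MeasureTheory.integral_div]
    congr 1; ext t; rw [div_div]
  rw [h2] at key
  rw [h1, key]
  apply setIntegral_congr_fun measurableSet_Ioi
  intro x _
  have h3 : (0:ℝ) < (2:ℝ) ^ (-x) := Real.rpow_pos_of_pos two_pos _
  simp only [smul_eq_mul, abs_neg]
  rw [abs_of_pos (by positivity)]
  field_simp
lemma half_eq : exp (-Real.log 2) = 1/2 := by
  rw [Real.exp_neg, Real.exp_log two_pos]; norm_num

lemma intA : IntegrableOn (fun x : ℝ => exp (-(2:ℝ) ^ x)) (Ioi 0) := by
  have hlog2 : (0:ℝ) < Real.log 2 := Real.log_pos one_lt_two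
  apply Integrable.mono ((exp_neg_integrableOn_Ioi 0 hlog2).const_mul (exp (-1)))
  · exact (continuous_exp.comp continuous_two_rpow.neg).aestronglyMeasurable
  · filter_upwards with x
    rw [Real.norm_eq_abs, Real.norm_eq_abs, abs_of_pos (exp_pos _), abs_of_pos (by positivity)]
    have := exp_neg_two_rpow_le x
    rwa [show -(Real.log 2 * x) = -Real.log 2 * x by ring] at this

lemma intB : IntegrableOn (fun x : ℝ => 1 - exp (-(2:ℝ) ^ (-x))) (Ioi 0) := by
  have hlog2 : (0:ℝ) < Real.log 2 := Real.log_pos one_lt_two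
  apply Integrable.mono (exp_neg_integrableOn_Ioi 0 hlog2)
  · exact (continuous_const.sub
      (continuous_exp.comp (continuous_two_rpow.comp continuous_neg).neg)).aestronglyMeasurable
  · filter_upwards with x
    have h3 : (0:ℝ) < (2:ℝ) ^ (-x) := Real.rpow_pos_of_pos two_pos _
    have h0 : 0 ≤ 1 - exp (-(2:ℝ) ^ (-x)) := by
      have : exp (-(2:ℝ) ^ (-x)) ≤ 1 := exp_le_one_iff.mpr (by linarith)
      linarith
    rw [Real.norm_eq_abs, Real.norm_eq_abs, abs_of_nonneg h0, abs_of_pos (exp_pos _)]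
    have h1 : 1 - exp (-(2:ℝ) ^ (-x)) ≤ (2:ℝ) ^ (-x) := by
      linarith [Real.add_one_le_exp (-(2:ℝ) ^ (-x))]
    calc 1 - exp (-(2:ℝ) ^ (-x)) ≤ (2:ℝ) ^ (-x) := h1
      _ = exp (-Real.log 2 * x) := by rw [two_rpow_eq]; ring_nf

-- pointwise summability
lemma summableA (x : ℝ) : Summable (fun j : ℕ => exp (-(2:ℝ) ^ (x + j))) := by
  refine Summable.of_nonneg_of_le (fun j => (exp_pos _).le) (fun j => ?_)
    ((summable_geometric_of_lt_one (r := (1/2:ℝ)) (by norm_num) (by norm_num)).mul_left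
      (exp (-1) * exp (-(Real.log 2) * x)))
  calc exp (-(2:ℝ) ^ (x + j)) ≤ exp (-1) * exp (-(Real.log 2 * (x + j))) :=
        exp_neg_two_rpow_le _
    _ = (exp (-1) * exp (-(Real.log 2) * x)) * (1/2) ^ j := by
        rw [← half_eq, ← Real.exp_nat_mul, ← Real.exp_add, ← Real.exp_add, ← Real.exp_add]
        congr 1
        ring

lemma summableB (x : ℝ) : Summable (fun j : ℕ => 1 - exp (-(2:ℝ) ^ (x - (j + 1)))) := by
  refine Summable.of_nonneg_of_le
    (fun j => by
      have : exp (-(2:ℝ) ^ (x - (j + 1))) ≤ 1 :=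
        exp_le_one_iff.mpr (by linarith [Real.rpow_pos_of_pos two_pos (x - ((j:ℝ) + 1))])
      linarith)
    (fun j => ?_)
    ((summable_geometric_of_lt_one (r := (1/2:ℝ)) (by norm_num) (by norm_num)).mul_left ((2:ℝ) ^ (x - 1)))
  have h1 : 1 - exp (-(2:ℝ) ^ (x - (j + 1))) ≤ (2:ℝ) ^ (x - (j + 1)) := by
      linarith [Real.add_one_le_exp (-(2:ℝ) ^ (x - ((j:ℝ) + 1)))]
  calc 1 - exp (-(2:ℝ) ^ (x - (j + 1))) ≤ (2:ℝ) ^ (x - (j + 1)) := h1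
    _ = (2:ℝ) ^ (x - 1) * (1/2) ^ j := by
        rw [show x - ((j:ℝ) + 1) = (x - 1) + (-(j:ℝ)) by ring, Real.rpow_add two_pos]
        congr 1
        rw [two_rpow_eq, ← half_eq, ← Real.exp_nat_mul]
        congr 1
        ring

lemma sumA_eq : ∫ x in Ioc (0:ℝ) 1, (∑' j : ℕ, exp (-(2:ℝ) ^ (x + j)))
    = ∫ x in Ioi (0:ℝ), exp (-(2:ℝ) ^ x) := by
  have hcont : ∀ j : ℕ, Continuous (fun x : ℝ => exp (-(2:ℝ) ^ (x + j))) := fun j =>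
    continuous_exp.comp (continuous_two_rpow.comp (continuous_id.add continuous_const)).neg
  have hFint : ∀ j : ℕ, Integrable (fun x : ℝ => exp (-(2:ℝ) ^ (x + j)))
      (volume.restrict (Ioc 0 1)) := fun j => (hcont j).integrableOn_Ioc
  have hbound : ∀ j : ℕ, ∀ x ∈ Ioc (0:ℝ) 1,
      ‖exp (-(2:ℝ) ^ (x + j))‖ ≤ exp (-1) * (1/2) ^ j := by
    intro j x hx
    rw [Real.norm_eq_abs, abs_of_pos (exp_pos _)]
    calc exp (-(2:ℝ) ^ (x + j)) ≤ exp (-1) * exp (-(Real.log 2 * (x + j))) :=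
          exp_neg_two_rpow_le _
      _ ≤ exp (-1) * (1/2) ^ j := by
          rw [← half_eq, ← Real.exp_nat_mul]
          gcongr
          have hx0 : (0:ℝ) ≤ x := hx.1.le
          have : (0:ℝ) < Real.log 2 := Real.log_pos one_lt_two
          nlinarith
  have hnorm : Summable fun j : ℕ => ∫ x in Ioc (0:ℝ) 1, ‖exp (-(2:ℝ) ^ (x + j))‖ := by
    refine Summable.of_nonneg_of_le
      (fun j => MeasureTheory.integral_nonneg (fun x => norm_nonneg _))
      (fun j => ?_)
      ((summable_geometric_of_lt_one (r := (1/2:ℝ)) (by norm_num) (by norm_num)).mul_left (exp (-1)))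
    calc (∫ x in Ioc (0:ℝ) 1, ‖exp (-(2:ℝ) ^ (x + j))‖)
        ≤ ∫ _x in Ioc (0:ℝ) 1, exp (-1) * (1/2) ^ j := by
          apply setIntegral_mono_on (hFint j).norm (integrableOn_const (by simp))
            measurableSet_Ioc
          exact hbound j
      _ = exp (-1) * (1/2) ^ j := by simp
  rw [← MeasureTheory.integral_tsum_of_summable_integral_norm hFint hnorm]
  -- now LHS : ∑' j, ∫ x in Ioc 0 1, exp (-(2:ℝ)^(x+j))
  have hterm : ∀ j : ℕ, (∫ x in Ioc (0:ℝ) 1, exp (-(2:ℝ) ^ (x + j)))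
      = ∫ x in (j:ℝ)..(j:ℝ)+1, exp (-(2:ℝ) ^ x) := by
    intro j
    rw [← intervalIntegral.integral_of_le zero_le_one]
    rw [show (fun x : ℝ => exp (-(2:ℝ) ^ (x + j))) = fun x : ℝ => exp (-(2:ℝ) ^ (x + (j:ℝ))) from rfl]
    rw [intervalIntegral.integral_comp_add_right (fun x => exp (-(2:ℝ) ^ x)) (j:ℝ)]
    norm_num [add_comm]
  have hii : ∀ a b : ℝ, IntervalIntegrable (fun x : ℝ => exp (-(2:ℝ) ^ x)) volume a b :=
    fun a b => (continuous_exp.comp continuous_two_rpow.neg).intervalIntegrable a b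
  have hpartial : ∀ n : ℕ, ∑ j ∈ Finset.range n, (∫ x in (j:ℝ)..(j:ℝ)+1, exp (-(2:ℝ) ^ x))
      = ∫ x in (0:ℝ)..(n:ℝ), exp (-(2:ℝ) ^ x) := by
    intro n
    induction n with
    | zero => simp
    | succ n ih =>
      rw [Finset.sum_range_succ, ih,
        intervalIntegral.integral_add_adjacent_intervals (hii 0 n) (hii n ((n:ℝ)+1))]
      norm_num
  have hsummable : Summable (fun j : ℕ => ∫ x in Ioc (0:ℝ) 1, exp (-(2:ℝ) ^ (x + j))) := by
    apply hnorm.congr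
    intro j
    apply setIntegral_congr_fun measurableSet_Ioc
    intro x _
    exact Real.norm_of_nonneg (exp_pos _).le
  have htendsto : Tendsto (fun n : ℕ => ∑ j ∈ Finset.range n,
      ∫ x in Ioc (0:ℝ) 1, exp (-(2:ℝ) ^ (x + j))) atTop
      (𝓝 (∫ x in Ioi (0:ℝ), exp (-(2:ℝ) ^ x))) := by
    have : (fun n : ℕ => ∑ j ∈ Finset.range n, ∫ x in Ioc (0:ℝ) 1, exp (-(2:ℝ) ^ (x + j)))
        = fun n : ℕ => ∫ x in (0:ℝ)..(n:ℝ), exp (-(2:ℝ) ^ x) := by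
      funext n
      rw [Finset.sum_congr rfl (fun j _ => hterm j), hpartial n]
    rw [this]
    exact intervalIntegral_tendsto_integral_Ioi 0 intA tendsto_natCast_atTop_atTop
  exact ((hsummable.hasSum_iff_tendsto_nat.mpr htendsto).tsum_eq)
lemma termB_nonneg (x : ℝ) (j : ℕ) : 0 ≤ 1 - exp (-(2:ℝ) ^ (x - (j + 1))) := by
  have : exp (-(2:ℝ) ^ (x - (j + 1))) ≤ 1 :=
    exp_le_one_iff.mpr (by linarith [Real.rpow_pos_of_pos two_pos (x - ((j:ℝ) + 1))])
  linarith

lemma termB_le (x : ℝ) (j : ℕ) :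
    1 - exp (-(2:ℝ) ^ (x - (j + 1))) ≤ (2:ℝ) ^ (x - 1) * (1/2) ^ j := by
  have h1 : 1 - exp (-(2:ℝ) ^ (x - (j + 1))) ≤ (2:ℝ) ^ (x - (j + 1)) := by
    linarith [Real.add_one_le_exp (-(2:ℝ) ^ (x - ((j:ℝ) + 1)))]
  calc 1 - exp (-(2:ℝ) ^ (x - (j + 1))) ≤ (2:ℝ) ^ (x - (j + 1)) := h1
    _ = (2:ℝ) ^ (x - 1) * (1/2) ^ j := by
        rw [show x - ((j:ℝ) + 1) = (x - 1) + (-(j:ℝ)) by ring, Real.rpow_add two_pos]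
        congr 1
        rw [two_rpow_eq, ← half_eq, ← Real.exp_nat_mul]
        congr 1
        ring

lemma sumB_eq : ∫ x in Ioc (0:ℝ) 1, (∑' j : ℕ, (1 - exp (-(2:ℝ) ^ (x - (j + 1)))))
    = ∫ x in Ioi (0:ℝ), (1 - exp (-(2:ℝ) ^ (-x))) := by
  have hcont : ∀ j : ℕ, Continuous (fun x : ℝ => 1 - exp (-(2:ℝ) ^ (x - ((j:ℝ) + 1)))) := fun j =>
    continuous_const.sub (continuous_exp.comp
      (continuous_two_rpow.comp (continuous_id.sub continuous_const)).neg)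
  have hFint : ∀ j : ℕ, Integrable (fun x : ℝ => 1 - exp (-(2:ℝ) ^ (x - ((j:ℝ) + 1))))
      (volume.restrict (Ioc 0 1)) := fun j => (hcont j).integrableOn_Ioc
  have hnorm : Summable fun j : ℕ =>
      ∫ x in Ioc (0:ℝ) 1, ‖1 - exp (-(2:ℝ) ^ (x - ((j:ℝ) + 1)))‖ := by
    refine Summable.of_nonneg_of_le
      (fun j => MeasureTheory.integral_nonneg (fun x => norm_nonneg _))
      (fun j => ?_)
      ((summable_geometric_of_lt_one (r := (1/2:ℝ)) (by norm_num) (by norm_num)).mul_left 1)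
    calc (∫ x in Ioc (0:ℝ) 1, ‖1 - exp (-(2:ℝ) ^ (x - ((j:ℝ) + 1)))‖)
        ≤ ∫ _x in Ioc (0:ℝ) 1, 1 * (1/2) ^ j := by
          apply setIntegral_mono_on (hFint j).norm (integrableOn_const (by simp))
            measurableSet_Ioc
          intro x hx
          rw [Real.norm_eq_abs, abs_of_nonneg (termB_nonneg x j)]
          calc 1 - exp (-(2:ℝ) ^ (x - ((j:ℝ) + 1))) ≤ (2:ℝ) ^ (x - 1) * (1/2) ^ j :=
                termB_le x j
            _ ≤ 1 * (1/2) ^ j := by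
                gcongr
                calc (2:ℝ) ^ (x - 1) ≤ (2:ℝ) ^ (0:ℝ) := by
                      apply Real.rpow_le_rpow_of_exponent_le one_le_two
                      linarith [hx.2]
                  _ = 1 := Real.rpow_zero 2
      _ = 1 * (1/2) ^ j := by simp
  rw [← MeasureTheory.integral_tsum_of_summable_integral_norm hFint hnorm]
  have hterm : ∀ j : ℕ, (∫ x in Ioc (0:ℝ) 1, (1 - exp (-(2:ℝ) ^ (x - ((j:ℝ) + 1)))))
      = ∫ x in (j:ℝ)..(j:ℝ)+1, (1 - exp (-(2:ℝ) ^ (-x))) := by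
    intro j
    rw [← intervalIntegral.integral_of_le zero_le_one]
    rw [show (fun x : ℝ => 1 - exp (-(2:ℝ) ^ (x - ((j:ℝ) + 1))))
        = fun x : ℝ => (fun t : ℝ => 1 - exp (-(2:ℝ) ^ t)) (x + (-((j:ℝ) + 1))) from by
      funext x; simp [sub_eq_add_neg]]
    rw [intervalIntegral.integral_comp_add_right (fun t : ℝ => 1 - exp (-(2:ℝ) ^ t))
      (-((j:ℝ) + 1))]
    rw [show (fun x : ℝ => 1 - exp (-(2:ℝ) ^ (-x)))
        = fun x : ℝ => (fun t : ℝ => 1 - exp (-(2:ℝ) ^ t)) (-x) from rfl]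
    rw [intervalIntegral.integral_comp_neg (fun t : ℝ => 1 - exp (-(2:ℝ) ^ t))]
    norm_num
  have hii : ∀ a b : ℝ, IntervalIntegrable (fun x : ℝ => 1 - exp (-(2:ℝ) ^ (-x))) volume a b :=
    fun a b => (continuous_const.sub (continuous_exp.comp
      (continuous_two_rpow.comp continuous_neg).neg)).intervalIntegrable a b
  have hpartial : ∀ n : ℕ, ∑ j ∈ Finset.range n,
      (∫ x in (j:ℝ)..(j:ℝ)+1, (1 - exp (-(2:ℝ) ^ (-x))))
      = ∫ x in (0:ℝ)..(n:ℝ), (1 - exp (-(2:ℝ) ^ (-x))) := by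
    intro n
    induction n with
    | zero => simp
    | succ n ih =>
      rw [Finset.sum_range_succ, ih,
        intervalIntegral.integral_add_adjacent_intervals (hii 0 n) (hii n ((n:ℝ)+1))]
      norm_num
  have hsummable : Summable (fun j : ℕ =>
      ∫ x in Ioc (0:ℝ) 1, (1 - exp (-(2:ℝ) ^ (x - ((j:ℝ) + 1))))) := by
    apply hnorm.congr
    intro j
    apply setIntegral_congr_fun measurableSet_Ioc
    intro x _
    exact Real.norm_of_nonneg (termB_nonneg x j)
  have htendsto : Tendsto (fun n : ℕ => ∑ j ∈ Finset.range n,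
      ∫ x in Ioc (0:ℝ) 1, (1 - exp (-(2:ℝ) ^ (x - ((j:ℝ) + 1))))) atTop
      (𝓝 (∫ x in Ioi (0:ℝ), (1 - exp (-(2:ℝ) ^ (-x))))) := by
    have heq : (fun n : ℕ => ∑ j ∈ Finset.range n,
        ∫ x in Ioc (0:ℝ) 1, (1 - exp (-(2:ℝ) ^ (x - ((j:ℝ) + 1)))))
        = fun n : ℕ => ∫ x in (0:ℝ)..(n:ℝ), (1 - exp (-(2:ℝ) ^ (-x))) := by
      funext n
      rw [Finset.sum_congr rfl (fun j _ => hterm j), hpartial n]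
    rw [heq]
    exact intervalIntegral_tendsto_integral_Ioi 0 intB tendsto_natCast_atTop_atTop
  exact ((hsummable.hasSum_iff_tendsto_nat.mpr htendsto).tsum_eq)

lemma antitoneA : Antitone (fun x : ℝ => ∑' j : ℕ, exp (-(2:ℝ) ^ (x + j))) := by
  intro x y hxy
  apply Summable.tsum_le_tsum _ (summableA y) (summableA x)
  intro j
  apply Real.exp_le_exp.mpr
  simp only [neg_le_neg_iff]
  exact Real.rpow_le_rpow_of_exponent_le one_le_two (by linarith)

lemma monotoneB : Monotone (fun x : ℝ => ∑' j : ℕ, (1 - exp (-(2:ℝ) ^ (x - (j + 1))))) := by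
  intro x y hxy
  apply Summable.tsum_le_tsum _ (summableB x) (summableB y)
  intro j
  have : (2:ℝ) ^ (x - ((j:ℝ) + 1)) ≤ (2:ℝ) ^ (y - ((j:ℝ) + 1)) :=
    Real.rpow_le_rpow_of_exponent_le one_le_two (by linarith)
  have := Real.exp_le_exp.mpr (neg_le_neg this)
  linarith


end GMeanZeroAux

open MeasureTheory Set Filter intervalIntegral Topology in
theorem g_mean_zero : ∫ x in (0 : ℝ)..1, g x = 0 := by
  have hlog2 : (0:ℝ) < Real.log 2 := Real.log_pos one_lt_two
  set c := Real.eulerMascheroniConstant / Real.log 2 with hc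
  have hA_ii : IntervalIntegrable (fun x : ℝ => ∑' j : ℕ, exp (-(2:ℝ) ^ (x + j))) volume 0 1 :=
    antitoneA.intervalIntegrable
  have hB_ii : IntervalIntegrable
      (fun x : ℝ => ∑' j : ℕ, (1 - exp (-(2:ℝ) ^ (x - (j + 1))))) volume 0 1 :=
    monotoneB.intervalIntegrable
  have hlin : IntervalIntegrable (fun x : ℝ => -x - c + 1/2) volume 0 1 :=
    (((continuous_neg.sub continuous_const).add continuous_const)).intervalIntegrable 0 1
  have hg : ∀ x : ℝ, g x = ((-x - c + 1/2) - ∑' j : ℕ, exp (-(2:ℝ) ^ (x + j)))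
      + ∑' j : ℕ, (1 - exp (-(2:ℝ) ^ (x - (j + 1)))) := fun x => rfl
  rw [intervalIntegral.integral_congr (g := fun x => ((-x - c + 1/2)
      - ∑' j : ℕ, exp (-(2:ℝ) ^ (x + j)))
      + ∑' j : ℕ, (1 - exp (-(2:ℝ) ^ (x - (j + 1))))) (fun x _ => hg x)]
  rw [intervalIntegral.integral_add (hlin.sub hA_ii) hB_ii,
    intervalIntegral.integral_sub hlin hA_ii]
  have hp : ∫ x in (0:ℝ)..1, (-x - c + 1/2) = -c := by
    have heq : (fun x : ℝ => -x - c + 1/2) = fun x : ℝ => -x + (1/2 - c) := by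
      funext x; ring
    rw [heq, intervalIntegral.integral_add (continuous_neg.intervalIntegrable 0 1)
      (intervalIntegrable_const), intervalIntegral.integral_neg, integral_id,
      intervalIntegral.integral_const]
    norm_num
    ring
  have hA : ∫ x in (0:ℝ)..1, (∑' j : ℕ, exp (-(2:ℝ) ^ (x + j)))
      = (∫ t in Ioi (1:ℝ), exp (-t) / t) / Real.log 2 := by
    rw [intervalIntegral.integral_of_le zero_le_one, sumA_eq, Ia_eq]
  have hB : ∫ x in (0:ℝ)..1, (∑' j : ℕ, (1 - exp (-(2:ℝ) ^ (x - (j + 1)))))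
      = (∫ t in Ioc (0:ℝ) 1, (1 - exp (-t)) / t) / Real.log 2 := by
    rw [intervalIntegral.integral_of_le zero_le_one, sumB_eq, Ib_eq]
  rw [hp, hA, hB, hc, gamma_as_integrals]
  field_simp
  ring
end
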